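/- Let φ : [0,∞) → [0,∞) be measurable with Λ := ∫₀^∞ φ(s) ds ∈ (0,∞). Then for every integer n ≥ 1 and every t ≥ 0: | ∫₀^t φ^{*n}(s) ds − Λⁿ | ≤ n·Λ^{n−1}·∫_{t/n}^∞ φ(s) ds. -/

import Mathlib

open MeasureTheory

noncomputable section

/-- Convolution powers of `φ`: `φ^{*1} = φ`, `φ^{*(n+1)}(t) = ∫₀^t φ^{*n}(t−s)·φ(s) ds`
(`convPow φ 0` is junk, never used). -/
def convPow (φ : ℝ → ℝ) : ℕ → ℝ → ℝ
  | 0 => fun _ => 0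
  | 1 => φ
  | n + 2 => fun t => ∫ s in (0 : ℝ)..t, convPow φ (n + 1) (t - s) * φ s

namespace Stmt14Aux

open Convolution Set

abbrev LL : ℝ →L[ℝ] ℝ →L[ℝ] ℝ := ContinuousLinearMap.mul ℝ ℝ

lemma conv_apply (f g : ℝ → ℝ) (x : ℝ) :
    (f ⋆[LL, volume] g) x = ∫ s, f s * g (x - s) := by
  simp [convolution_def]

/-- The key tail estimate for a convolution of two nonnegative integrable functions. -/
lemma tail_conv (f g : ℝ → ℝ) (hf : Integrable f) (hg : Integrable g)
    (hf0 : ∀ x, 0 ≤ f x) (hg0 : ∀ x, 0 ≤ g x) (a b : ℝ) :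
    ∫ x in Set.Ioi (a + b), (f ⋆[LL, volume] g) x
      ≤ (∫ x in Set.Ioi a, f x) * (∫ x, g x) + (∫ x, f x) * (∫ x in Set.Ioi b, g x) := by
  set f₁ : ℝ → ℝ := (Set.Iic a).indicator f with hf₁def
  set f₂ : ℝ → ℝ := (Set.Ioi a).indicator f with hf₂def
  set g₁ : ℝ → ℝ := (Set.Iic b).indicator g with hg₁def
  set g₂ : ℝ → ℝ := (Set.Ioi b).indicator g with hg₂def
  have hfsplit : ∀ x, f x = f₁ x + f₂ x := by
    intro x
    by_cases hx : x ≤ a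
    · simp [f₁, f₂, Set.indicator_apply, hx, not_lt.mpr hx]
    · simp [f₁, f₂, Set.indicator_apply, hx, not_le.mp hx]
  have hgsplit : ∀ x, g x = g₁ x + g₂ x := by
    intro x
    by_cases hx : x ≤ b
    · simp [g₁, g₂, Set.indicator_apply, hx, not_lt.mpr hx]
    · simp [g₁, g₂, Set.indicator_apply, hx, not_le.mp hx]
  have hf₁ : Integrable f₁ := hf.indicator measurableSet_Iic
  have hf₂ : Integrable f₂ := hf.indicator measurableSet_Ioi
  have hg₁ : Integrable g₁ := hg.indicator measurableSet_Iic
  have hg₂ : Integrable g₂ := hg.indicator measurableSet_Ioi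
  have hf₁0 : ∀ x, 0 ≤ f₁ x := fun x => Set.indicator_nonneg (fun y _ => hf0 y) x
  have hf₂0 : ∀ x, 0 ≤ f₂ x := fun x => Set.indicator_nonneg (fun y _ => hf0 y) x
  have hg₁0 : ∀ x, 0 ≤ g₁ x := fun x => Set.indicator_nonneg (fun y _ => hg0 y) x
  have hg₂0 : ∀ x, 0 ≤ g₂ x := fun x => Set.indicator_nonneg (fun y _ => hg0 y) x
  -- a.e. decomposition on the tail
  have e11 := hf₁.ae_convolution_exists (μ := volume) (ν := volume) LL hg₁
  have e12 := hf₁.ae_convolution_exists (μ := volume) (ν := volume) LL hg₂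
  have e21 := hf₂.ae_convolution_exists (μ := volume) (ν := volume) LL hg₁
  have e22 := hf₂.ae_convolution_exists (μ := volume) (ν := volume) LL hg₂
  have key : ∀ᵐ x, x ∈ Set.Ioi (a + b) →
      (f ⋆[LL, volume] g) x
        = (f₁ ⋆[LL, volume] g₂) x + ((f₂ ⋆[LL, volume] g₁) x + (f₂ ⋆[LL, volume] g₂) x) := by
    filter_upwards [e11, e12, e21, e22] with x h11 h12 h21 h22 hx
    have h11' : Integrable (fun s => f₁ s * g₁ (x - s)) := by
      simpa [ConvolutionExistsAt] using h11
    have h12' : Integrable (fun s => f₁ s * g₂ (x - s)) := by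
      simpa [ConvolutionExistsAt] using h12
    have h21' : Integrable (fun s => f₂ s * g₁ (x - s)) := by
      simpa [ConvolutionExistsAt] using h21
    have h22' : Integrable (fun s => f₂ s * g₂ (x - s)) := by
      simpa [ConvolutionExistsAt] using h22
    have hzero11 : ∀ s, f₁ s * g₁ (x - s) = 0 := by
      intro s
      by_cases hs : s ≤ a
      · have : ¬ (x - s ≤ b) := by
          simp only [Set.mem_Ioi] at hx; linarith
        have : g₁ (x - s) = 0 := Set.indicator_of_notMem (by simpa using this) g
        simp [this]
      · have : f₁ s = 0 := Set.indicator_of_notMem (by simpa using hs) f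
        simp [this]
    calc (f ⋆[LL, volume] g) x
        = ∫ s, f s * g (x - s) := conv_apply f g x
      _ = ∫ s, (f₁ s * g₁ (x - s) + (f₁ s * g₂ (x - s) +
            (f₂ s * g₁ (x - s) + f₂ s * g₂ (x - s)))) := by
          congr 1; funext s
          rw [hfsplit s, hgsplit (x - s)]; ring
      _ = (∫ s, f₁ s * g₁ (x - s)) + ((∫ s, f₁ s * g₂ (x - s)) +
            ((∫ s, f₂ s * g₁ (x - s)) + (∫ s, f₂ s * g₂ (x - s)))) := by
          have hrest1 : Integrable (fun s => f₂ s * g₁ (x - s) + f₂ s * g₂ (x - s)) :=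
            h21'.add h22'
          have hrest2 : Integrable (fun s => f₁ s * g₂ (x - s) +
              (f₂ s * g₁ (x - s) + f₂ s * g₂ (x - s))) := h12'.add hrest1
          have A : (∫ s, f₁ s * g₁ (x - s) + (f₁ s * g₂ (x - s) +
                (f₂ s * g₁ (x - s) + f₂ s * g₂ (x - s))))
              = (∫ s, f₁ s * g₁ (x - s)) + ∫ s, (f₁ s * g₂ (x - s) +
                (f₂ s * g₁ (x - s) + f₂ s * g₂ (x - s))) := integral_add h11' hrest2
          have B : (∫ s, f₁ s * g₂ (x - s) + (f₂ s * g₁ (x - s) + f₂ s * g₂ (x - s)))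
              = (∫ s, f₁ s * g₂ (x - s)) + ∫ s, (f₂ s * g₁ (x - s) + f₂ s * g₂ (x - s)) :=
            integral_add h12' hrest1
          have C : (∫ s, f₂ s * g₁ (x - s) + f₂ s * g₂ (x - s))
              = (∫ s, f₂ s * g₁ (x - s)) + ∫ s, f₂ s * g₂ (x - s) := integral_add h21' h22'
          rw [A, B, C]
      _ = (f₁ ⋆[LL, volume] g₂) x + ((f₂ ⋆[LL, volume] g₁) x + (f₂ ⋆[LL, volume] g₂) x) := by
          rw [conv_apply, conv_apply, conv_apply]
          simp [hzero11]
  have hsum_int : Integrable (fun x => (f₁ ⋆[LL, volume] g₂) x +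
      ((f₂ ⋆[LL, volume] g₁) x + (f₂ ⋆[LL, volume] g₂) x)) :=
    (hf₁.integrable_convolution LL hg₂).add
      ((hf₂.integrable_convolution LL hg₁).add (hf₂.integrable_convolution LL hg₂))
  have hconv_nonneg : ∀ (u v : ℝ → ℝ), (∀ x, 0 ≤ u x) → (∀ x, 0 ≤ v x) →
      ∀ x, 0 ≤ (u ⋆[LL, volume] v) x := by
    intro u v hu hv x
    rw [conv_apply]
    exact integral_nonneg fun s => mul_nonneg (hu s) (hv (x - s))
  calc ∫ x in Set.Ioi (a + b), (f ⋆[LL, volume] g) x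
      = ∫ x in Set.Ioi (a + b), ((f₁ ⋆[LL, volume] g₂) x +
          ((f₂ ⋆[LL, volume] g₁) x + (f₂ ⋆[LL, volume] g₂) x)) := by
        apply setIntegral_congr_ae measurableSet_Ioi
        exact key
    _ ≤ ∫ x, ((f₁ ⋆[LL, volume] g₂) x +
          ((f₂ ⋆[LL, volume] g₁) x + (f₂ ⋆[LL, volume] g₂) x)) := by
        apply setIntegral_le_integral hsum_int
        filter_upwards with x
        have h1 := hconv_nonneg f₁ g₂ hf₁0 hg₂0 x
        have h2 := hconv_nonneg f₂ g₁ hf₂0 hg₁0 x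
        have h3 := hconv_nonneg f₂ g₂ hf₂0 hg₂0 x
        positivity
    _ = (∫ x, f₁ x) * (∫ x, g₂ x) + ((∫ x, f₂ x) * (∫ x, g₁ x) +
          (∫ x, f₂ x) * (∫ x, g₂ x)) := by
        have I1 := hf₁.integrable_convolution LL hg₂
        have I2 := hf₂.integrable_convolution LL hg₁
        have I3 := hf₂.integrable_convolution LL hg₂
        have A : (∫ x, (f₁ ⋆[LL, volume] g₂) x +
              ((f₂ ⋆[LL, volume] g₁) x + (f₂ ⋆[LL, volume] g₂) x))
            = (∫ x, (f₁ ⋆[LL, volume] g₂) x) +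
              ∫ x, ((f₂ ⋆[LL, volume] g₁) x + (f₂ ⋆[LL, volume] g₂) x) :=
          integral_add I1 (I2.add I3)
        have B : (∫ x, ((f₂ ⋆[LL, volume] g₁) x + (f₂ ⋆[LL, volume] g₂) x))
            = (∫ x, (f₂ ⋆[LL, volume] g₁) x) + ∫ x, (f₂ ⋆[LL, volume] g₂) x :=
          integral_add I2 I3
        rw [A, B, integral_convolution LL hf₁ hg₂, integral_convolution LL hf₂ hg₁,
          integral_convolution LL hf₂ hg₂]
        simp
    _ = (∫ x, f₁ x) * (∫ x, g₂ x) + (∫ x, f₂ x) * (∫ x, g x) := by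
        have : (∫ x, g x) = (∫ x, g₁ x) + (∫ x, g₂ x) := by
          rw [← integral_add hg₁ hg₂]
          congr 1; funext x; exact hgsplit x
        rw [this]; ring
    _ ≤ (∫ x, f x) * (∫ x in Set.Ioi b, g x) + (∫ x in Set.Ioi a, f x) * (∫ x, g x) := by
        have hg₂eq : (∫ x, g₂ x) = ∫ x in Set.Ioi b, g x := integral_indicator measurableSet_Ioi
        have hf₂eq : (∫ x, f₂ x) = ∫ x in Set.Ioi a, f x := integral_indicator measurableSet_Ioi
        rw [hg₂eq, hf₂eq]
        have h1 : (∫ x, f₁ x) ≤ ∫ x, f x :=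
          integral_mono hf₁ hf (Set.indicator_le_self' fun x _ => hf0 x)
        have h2 : (0:ℝ) ≤ ∫ x in Set.Ioi b, g x :=
          setIntegral_nonneg measurableSet_Ioi fun x _ => hg0 x
        nlinarith
    _ = (∫ x in Set.Ioi a, f x) * (∫ x, g x) + (∫ x, f x) * (∫ x in Set.Ioi b, g x) := by ring


/-- For `t < 0` the convolution integrand vanishes identically. -/
lemma integrand_zero (φ ψ : ℝ → ℝ) (hφz : ∀ s < (0:ℝ), φ s = 0) (hψz : ∀ s < (0:ℝ), ψ s = 0)
    {t : ℝ} (ht : t < 0) : ∀ s, φ s * ψ (t - s) = 0 := by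
  intro s
  rcases lt_or_ge s 0 with hs | hs
  · rw [hφz s hs, zero_mul]
  · rw [hψz (t - s) (by linarith), mul_zero]

/-- The interval-integral convolution agrees with the Mathlib convolution. -/
lemma key_eq (φ ψ : ℝ → ℝ) (hφz : ∀ s < (0:ℝ), φ s = 0) (hψz : ∀ s < (0:ℝ), ψ s = 0)
    (t : ℝ) :
    (∫ s in (0:ℝ)..t, ψ (t - s) * φ s) = (φ ⋆[LL, volume] ψ) t := by
  rcases le_or_gt 0 t with ht | ht
  · rw [conv_apply]
    have hvan : ∀ s, s ∉ Set.Icc (0:ℝ) t → φ s * ψ (t - s) = 0 := by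
      intro s hs
      rcases lt_or_ge s 0 with h | h
      · rw [hφz s h, zero_mul]
      · have hts : t < s := by
          by_contra hc
          exact hs ⟨h, not_lt.mp hc⟩
        rw [hψz (t - s) (by linarith), mul_zero]
    rw [← setIntegral_eq_integral_of_forall_compl_eq_zero hvan,
      integral_Icc_eq_integral_Ioc, intervalIntegral.integral_of_le ht]
    exact setIntegral_congr_fun measurableSet_Ioc fun s _ => mul_comm _ _
  · have h0 := integrand_zero φ ψ hφz hψz ht
    rw [conv_apply]
    have h1 : (∫ s, φ s * ψ (t - s)) = 0 := by
      simp only [h0]; exact integral_zero _ _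
    have h2 : (∫ s in (0:ℝ)..t, ψ (t - s) * φ s) = 0 := by
      have : ∀ s, ψ (t - s) * φ s = 0 := fun s => by rw [mul_comm]; exact h0 s
      simp only [this]
      exact intervalIntegral.integral_zero
    rw [h1, h2]

section Main

variable {φ : ℝ → ℝ}
  (hmeas : Measurable φ) (hnonneg : ∀ s, 0 ≤ φ s) (hzero : ∀ s < (0 : ℝ), φ s = 0)
  (hint : Integrable φ)

include hnonneg hzero hint

lemma integral_phi_eq : (∫ s, φ s) = ∫ s in Set.Ioi (0:ℝ), φ s := by
  rw [← integral_Ici_eq_integral_Ioi,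
    setIntegral_eq_integral_of_forall_compl_eq_zero
      (fun x hx => hzero x (by simpa using hx))]

/-- All the facts about convolution powers, by induction. -/
lemma convPow_facts : ∀ n : ℕ, 1 ≤ n →
    (∀ t < (0:ℝ), convPow φ n t = 0) ∧ (∀ t, 0 ≤ convPow φ n t) ∧
      Integrable (convPow φ n) ∧ (∫ x, convPow φ n x) = (∫ x, φ x) ^ n := by
  intro n hn
  induction n, hn using Nat.le_induction with
  | base => exact ⟨hzero, hnonneg, hint, (pow_one _).symm⟩
  | succ n hn ih =>
    obtain ⟨hz, hnn, hI, hval⟩ := ih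
    obtain ⟨m, rfl⟩ : ∃ m, n = m + 1 := ⟨n - 1, (Nat.succ_pred_eq_of_pos hn).symm⟩
    have hdef : convPow φ (m + 1 + 1) = φ ⋆[LL, volume] convPow φ (m + 1) := by
      funext t
      show (∫ s in (0:ℝ)..t, convPow φ (m + 1) (t - s) * φ s) = _
      exact key_eq φ (convPow φ (m + 1)) hzero hz t
    refine ⟨?_, ?_, ?_, ?_⟩
    · intro t ht
      rw [hdef, conv_apply]
      simp only [integrand_zero φ (convPow φ (m+1)) hzero hz ht]
      exact integral_zero _ _
    · intro t
      rw [hdef, conv_apply]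
      exact integral_nonneg fun s => mul_nonneg (hnonneg s) (hnn (t - s))
    · rw [hdef]
      exact hint.integrable_convolution LL hI
    · rw [hdef, integral_convolution LL hint hI, hval]
      simp [pow_succ, mul_comm]

/-- Tail identity: for `t ≥ 0`, `Λⁿ − ∫₀ᵗ φ^{*n} = ∫_{Ioi t} φ^{*n}`. -/
lemma tail_eq {n : ℕ} (hn : 1 ≤ n) {t : ℝ} (ht : 0 ≤ t) :
    (∫ x, φ x) ^ n - (∫ s in (0:ℝ)..t, convPow φ n s)
      = ∫ s in Set.Ioi t, convPow φ n s := by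
  obtain ⟨hz, hnn, hI, hval⟩ := convPow_facts hnonneg hzero hint n hn
  have h1 : (∫ x, convPow φ n x) = ∫ x in Set.Ioi (0:ℝ), convPow φ n x := by
    rw [← integral_Ici_eq_integral_Ioi,
      setIntegral_eq_integral_of_forall_compl_eq_zero
        (fun x hx => hz x (by simpa using hx))]
  have h2 : (∫ x in Set.Ioi (0:ℝ), convPow φ n x)
      = (∫ x in Set.Ioc (0:ℝ) t, convPow φ n x) + ∫ x in Set.Ioi t, convPow φ n x := by
    rw [← setIntegral_union (Set.Ioc_disjoint_Ioi le_rfl) measurableSet_Ioi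
      hI.integrableOn hI.integrableOn, Set.Ioc_union_Ioi_eq_Ioi ht]
  rw [intervalIntegral.integral_of_le ht, ← hval, h1, h2]
  ring

/-- Main tail bound by induction. -/
lemma tail_bound : ∀ n : ℕ, 1 ≤ n → ∀ t : ℝ, 0 ≤ t →
    (∫ s in Set.Ioi t, convPow φ n s)
      ≤ (n : ℝ) * (∫ x, φ x) ^ (n - 1) * ∫ s in Set.Ioi (t / (n : ℝ)), φ s := by
  intro n hn
  induction n, hn using Nat.le_induction with
  | base =>
    intro t ht
    simp [convPow]
  | succ n hn ih =>
    intro t ht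
    obtain ⟨hz, hnn, hI, hval⟩ := convPow_facts hnonneg hzero hint n hn
    have hnR : (0:ℝ) < n := by exact_mod_cast hn
    set a : ℝ := t / (n + 1 : ℝ) with ha
    have hn1 : (0:ℝ) < (n:ℝ) + 1 := by positivity
    have hb : t - a = (n : ℝ) * a := by
      field_simp [ha]
      have h := div_mul_cancel₀ t (ne_of_gt hn1); rw [← ha] at h; linarith
    have hab : a + (t - a) = t := by ring
    obtain ⟨m, rfl⟩ : ∃ m, n = m + 1 := ⟨n - 1, (Nat.succ_pred_eq_of_pos hn).symm⟩
    have hdef : convPow φ (m + 1 + 1) = φ ⋆[LL, volume] convPow φ (m + 1) := by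
      funext u
      show (∫ s in (0:ℝ)..u, convPow φ (m + 1) (u - s) * φ s) = _
      exact key_eq φ (convPow φ (m + 1)) hzero hz u
    have hΛ0 : 0 ≤ ∫ x, φ x := integral_nonneg hnonneg
    have hta : 0 ≤ t - a := by
      have : a ≤ t := div_le_self ht (by linarith)
      linarith
    have harg : (t - a) / ((m + 1 : ℕ) : ℝ) = a := by
      rw [hb, mul_div_cancel_left₀ _ (ne_of_gt hnR)]
    have hIH' : (∫ x in Set.Ioi (t - a), convPow φ (m + 1) x)
        ≤ ((m + 1 : ℕ) : ℝ) * (∫ x, φ x) ^ m * ∫ s in Set.Ioi a, φ s := by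
      have h := ih (t - a) hta
      rw [harg] at h
      simpa using h
    calc (∫ s in Set.Ioi t, convPow φ (m + 1 + 1) s)
        = ∫ s in Set.Ioi (a + (t - a)), (φ ⋆[LL, volume] convPow φ (m + 1)) s := by
          rw [hdef, hab]
      _ ≤ (∫ x in Set.Ioi a, φ x) * (∫ x, convPow φ (m + 1) x)
          + (∫ x, φ x) * (∫ x in Set.Ioi (t - a), convPow φ (m + 1) x) :=
          tail_conv φ _ hint hI hnonneg hnn a (t - a)
      _ ≤ (∫ x in Set.Ioi a, φ x) * (∫ x, φ x) ^ (m + 1)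
          + (∫ x, φ x) * (((m + 1 : ℕ) : ℝ) * (∫ x, φ x) ^ m * ∫ s in Set.Ioi a, φ s) := by
          rw [hval]
          exact add_le_add (le_refl _) (mul_le_mul_of_nonneg_left hIH' hΛ0)
      _ = ((m + 1 + 1 : ℕ) : ℝ) * (∫ x, φ x) ^ (m + 1 + 1 - 1)
          * ∫ s in Set.Ioi (t / ((m + 1 + 1 : ℕ) : ℝ)), φ s := by
          have hIoi : Set.Ioi (t / ((m + 1 + 1 : ℕ) : ℝ)) = Set.Ioi a := by
            rw [ha]; norm_num
          rw [hIoi]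
          push_cast
          ring

end Main

end Stmt14Aux

/-- if `Λ = ∫₀^∞ φ ∈ (0,∞)`, then for every `n ≥ 1` and `t ≥ 0`,
`|∫₀^t φ^{*n}(s) ds − Λⁿ| ≤ n·Λ^{n−1}·∫_{t/n}^∞ φ(s) ds`. -/
theorem stmt_14 (φ : ℝ → ℝ)
    (hmeas : Measurable φ) (hnonneg : ∀ s, 0 ≤ φ s) (hzero : ∀ s < (0 : ℝ), φ s = 0)
    (hint : Integrable φ)
    (Λ : ℝ) (hΛdef : Λ = ∫ s in Set.Ioi (0 : ℝ), φ s) (hΛpos : 0 < Λ) :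
    ∀ n : ℕ, 1 ≤ n → ∀ t : ℝ, 0 ≤ t →
      |(∫ s in (0 : ℝ)..t, convPow φ n s) - Λ ^ n|
        ≤ (n : ℝ) * Λ ^ (n - 1) * ∫ s in Set.Ioi (t / (n : ℝ)), φ s := by
  intro n hn t ht
  obtain ⟨hz, hnn, hI, hval⟩ := Stmt14Aux.convPow_facts hnonneg hzero hint n hn
  have hΛ : Λ = ∫ x, φ x := by
    rw [hΛdef, Stmt14Aux.integral_phi_eq hnonneg hzero hint]
  have h1 := Stmt14Aux.tail_eq hnonneg hzero hint hn ht (φ := φ)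
  have h2 : 0 ≤ ∫ s in Set.Ioi t, convPow φ n s :=
    setIntegral_nonneg measurableSet_Ioi fun x _ => hnn x
  have h3 := Stmt14Aux.tail_bound hnonneg hzero hint n hn t ht
  rw [hΛ, abs_sub_comm, h1, abs_of_nonneg h2]
  exact h3
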